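/- Let U : ℝ^d → ℝ have gradient ξ = ∇U twice continuously differentiable, let α ∈ ℝ, r > 0, and suppose the level set ℳ_α = {x : U(x) = α} meets 𝒩^c = {x : ξ(x) ≠ 0}. Choose ε > 0 with ℳ_α^ε ⊆ 𝒩^c. Then there exists a constant C(ε,α,r) > 0 such that for every z = (x,v) with |z| ≤ r and x ∈ ℳ_α^{ε/2}, and every 0 < h < min{ε/r, (ε/(2C(r)))^{1/2}}, one has |𝐩(φ_h(z)) − 𝐩(z) − h·(ã(z) + (0, b̃(z)))| ≤ h²·C(ε,α,r), where C(r) = r·sup_{|y|≤r}|ξ(y)| + r²·sup_{|y|≤r}|∂ξ(y)|. -/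

import Mathlib

open MeasureTheory
open scoped ENNReal RealInnerProductSpace

/-- The circle transform with angle `h` on `ℝ^d × ℝ^d`. -/
noncomputable def circleT (d : ℕ) (h : ℝ)
    (z : EuclideanSpace ℝ (Fin d) × EuclideanSpace ℝ (Fin d)) :
    EuclideanSpace ℝ (Fin d) × EuclideanSpace ℝ (Fin d) :=
  (Real.cos h • z.1 + Real.sin h • z.2, -(Real.sin h) • z.1 + Real.cos h • z.2)

/-- The normalized vector field `ξ̄(x) = ξ(x)/|ξ(x)|` (junk value `0` on `𝒩 = {ξ = 0}`). -/
noncomputable def xibar (d : ℕ) (ξ : EuclideanSpace ℝ (Fin d) → EuclideanSpace ℝ (Fin d))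
    (x : EuclideanSpace ℝ (Fin d)) : EuclideanSpace ℝ (Fin d) :=
  ‖ξ x‖⁻¹ • ξ x

open Classical in
/-- The reflection `R(x)v = v − 2(ξ̄(x)ᵀv)ξ̄(x)` for `x ∉ 𝒩`, and `R(x)v = −v` for `x ∈ 𝒩`. -/
noncomputable def reflT (d : ℕ) (ξ : EuclideanSpace ℝ (Fin d) → EuclideanSpace ℝ (Fin d))
    (x v : EuclideanSpace ℝ (Fin d)) : EuclideanSpace ℝ (Fin d) :=
  if ξ x = 0 then -v else v - (2 * ⟪xibar d ξ x, v⟫) • xibar d ξ x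

/-- The bounce transform `Φ_bounce(x,v) = (x, R(x)v)`. -/
noncomputable def bounceT (d : ℕ) (ξ : EuclideanSpace ℝ (Fin d) → EuclideanSpace ℝ (Fin d))
    (z : EuclideanSpace ℝ (Fin d) × EuclideanSpace ℝ (Fin d)) :
    EuclideanSpace ℝ (Fin d) × EuclideanSpace ℝ (Fin d) :=
  (z.1, reflT d ξ z.1 z.2)

/-- The tangential projection `P(x)v = v − (ξ̄(x)ᵀv)ξ̄(x)`. -/
noncomputable def tangP (d : ℕ) (ξ : EuclideanSpace ℝ (Fin d) → EuclideanSpace ℝ (Fin d))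
    (x v : EuclideanSpace ℝ (Fin d)) : EuclideanSpace ℝ (Fin d) :=
  v - ⟪xibar d ξ x, v⟫ • xibar d ξ x

/-- The projection `𝐩(x,v) = (x, P(x)v)`. -/
noncomputable def pbf (d : ℕ) (ξ : EuclideanSpace ℝ (Fin d) → EuclideanSpace ℝ (Fin d))
    (z : EuclideanSpace ℝ (Fin d) × EuclideanSpace ℝ (Fin d)) :
    EuclideanSpace ℝ (Fin d) × EuclideanSpace ℝ (Fin d) :=
  (z.1, tangP d ξ z.1 z.2)

/-- The directional derivative `∂ξ̄(x)[u,w] = uᵀ(Dξ̄(x)w)`. -/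
noncomputable def dxib (d : ℕ) (ξ : EuclideanSpace ℝ (Fin d) → EuclideanSpace ℝ (Fin d))
    (x u w : EuclideanSpace ℝ (Fin d)) : ℝ :=
  ⟪u, fderiv ℝ (xibar d ξ) x w⟫

/-- The vector field `ã(x,v) = 2(P(x)v, −P(x)x)`. -/
noncomputable def atilde (d : ℕ) (ξ : EuclideanSpace ℝ (Fin d) → EuclideanSpace ℝ (Fin d))
    (x v : EuclideanSpace ℝ (Fin d)) :
    EuclideanSpace ℝ (Fin d) × EuclideanSpace ℝ (Fin d) :=
  ((2 : ℝ) • tangP d ξ x v, (-2 : ℝ) • tangP d ξ x x)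

/-- The vector `b̃(x,v)`, the unique vector satisfying
`uᵀb̃(x,v) = ∂P(x)[u,v,v] + ∂P(x)[u,R(x)v,R(x)v]` for all `u`, where
`∂P(x)[u,v,w] = −(ξ̄(x)ᵀv)∂ξ̄(x)[u,w] − (ξ̄(x)ᵀu)∂ξ̄(x)[v,w]`. -/
noncomputable def btilde (d : ℕ) (ξ : EuclideanSpace ℝ (Fin d) → EuclideanSpace ℝ (Fin d))
    (x v : EuclideanSpace ℝ (Fin d)) : EuclideanSpace ℝ (Fin d) :=
  (-⟪xibar d ξ x, v⟫) • fderiv ℝ (xibar d ξ) x v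
    - dxib d ξ x v v • xibar d ξ x
    + (-⟪xibar d ξ x, reflT d ξ x v⟫) • fderiv ℝ (xibar d ξ) x (reflT d ξ x v)
    - dxib d ξ x (reflT d ξ x v) (reflT d ξ x v) • xibar d ξ x

/-- The level set `ℳ_α = {x : U(x) = α}`. -/
def Mlevel (d : ℕ) (U : EuclideanSpace ℝ (Fin d) → ℝ) (α : ℝ) :
    Set (EuclideanSpace ℝ (Fin d)) :=
  {x | U x = α}

/-- The `ε`-perturbed level set `ℳ_α^ε`. -/
def Mpert (d : ℕ) (U : EuclideanSpace ℝ (Fin d) → ℝ) (α ε : ℝ) :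
    Set (EuclideanSpace ℝ (Fin d)) :=
  {x | ∃ y, ‖x - y‖ ≤ ε ∧ |U y - α| ≤ ε}

section Aux
variable {d : ℕ} {ξ : EuclideanSpace ℝ (Fin d) → EuclideanSpace ℝ (Fin d)}

lemma xibar_contDiffAt (hξ : ContDiff ℝ 2 ξ) {x : EuclideanSpace ℝ (Fin d)} (hx : ξ x ≠ 0) :
    ContDiffAt ℝ 2 (xibar d ξ) x :=
  ((hξ.contDiffAt.norm ℝ hx).inv (norm_ne_zero_iff.2 hx)).smul hξ.contDiffAt

lemma inner_xibar_self {x : EuclideanSpace ℝ (Fin d)} (hx : ξ x ≠ 0) :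
    ⟪xibar d ξ x, xibar d ξ x⟫ = 1 := by
  have h : ‖ξ x‖ ≠ 0 := norm_ne_zero_iff.2 hx
  rw [xibar, real_inner_smul_left, real_inner_smul_right, real_inner_self_eq_norm_mul_norm]
  field_simp

lemma norm_xibar_le_one (x : EuclideanSpace ℝ (Fin d)) : ‖xibar d ξ x‖ ≤ 1 := by
  by_cases h : ξ x = 0
  · simp [xibar, h]
  · have h' : ‖ξ x‖ ≠ 0 := norm_ne_zero_iff.2 h
    rw [xibar, norm_smul, norm_inv, norm_norm, inv_mul_cancel₀ h']

lemma isOpen_ne_zero (hξ : ContDiff ℝ 2 ξ) : IsOpen {y | ξ y ≠ 0} :=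
  isOpen_compl_singleton.preimage hξ.continuous

lemma inner_xibar_fderiv (hξ : ContDiff ℝ 2 ξ) {x : EuclideanSpace ℝ (Fin d)} (hx : ξ x ≠ 0)
    (u : EuclideanSpace ℝ (Fin d)) :
    ⟪xibar d ξ x, fderiv ℝ (xibar d ξ) x u⟫ = 0 := by
  have hdiff : DifferentiableAt ℝ (xibar d ξ) x :=
    (xibar_contDiffAt hξ hx).differentiableAt (by norm_num)
  have hD := hdiff.hasFDerivAt
  have h1 := hD.inner ℝ hD
  have hev : (fun y => ⟪xibar d ξ y, xibar d ξ y⟫) =ᶠ[nhds x] fun _ => (1 : ℝ) := by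
    filter_upwards [(isOpen_ne_zero hξ).mem_nhds hx] with y hy using inner_xibar_self hy
  have h2 : HasFDerivAt (fun y => ⟪xibar d ξ y, xibar d ξ y⟫)
      (0 : EuclideanSpace ℝ (Fin d) →L[ℝ] ℝ) x :=
    (hasFDerivAt_const (1 : ℝ) x).congr_of_eventuallyEq hev
  have h3 := h1.unique h2
  have h4 := congrFun (congrArg DFunLike.coe h3) u
  simp only [ContinuousLinearMap.comp_apply, ContinuousLinearMap.prod_apply,
    fderivInnerCLM_apply, ContinuousLinearMap.zero_apply] at h4
  have := real_inner_comm (xibar d ξ x) (fderiv ℝ (xibar d ξ) x u)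
  linarith [h4, this]

end Aux



noncomputable def weaveS (d : ℕ) (ξ : EuclideanSpace ℝ (Fin d) → EuclideanSpace ℝ (Fin d))
    (z : EuclideanSpace ℝ (Fin d) × EuclideanSpace ℝ (Fin d)) (h : ℝ) :
    EuclideanSpace ℝ (Fin d) × EuclideanSpace ℝ (Fin d) :=
  (Real.cos h • (Real.cos h • z.1 + Real.sin h • z.2) +
     Real.sin h • ((-Real.sin h • z.1 + Real.cos h • z.2) -
       (2 * ⟪xibar d ξ (Real.cos h • z.1 + Real.sin h • z.2),
             -Real.sin h • z.1 + Real.cos h • z.2⟫) •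
         xibar d ξ (Real.cos h • z.1 + Real.sin h • z.2)),
   (-Real.sin h • (Real.cos h • z.1 + Real.sin h • z.2) +
     Real.cos h • ((-Real.sin h • z.1 + Real.cos h • z.2) -
       (2 * ⟪xibar d ξ (Real.cos h • z.1 + Real.sin h • z.2),
             -Real.sin h • z.1 + Real.cos h • z.2⟫) •
         xibar d ξ (Real.cos h • z.1 + Real.sin h • z.2))) -
    ⟪xibar d ξ (Real.cos h • (Real.cos h • z.1 + Real.sin h • z.2) +
        Real.sin h • ((-Real.sin h • z.1 + Real.cos h • z.2) -
          (2 * ⟪xibar d ξ (Real.cos h • z.1 + Real.sin h • z.2),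
                -Real.sin h • z.1 + Real.cos h • z.2⟫) •
            xibar d ξ (Real.cos h • z.1 + Real.sin h • z.2))),
      (-Real.sin h • (Real.cos h • z.1 + Real.sin h • z.2) +
        Real.cos h • ((-Real.sin h • z.1 + Real.cos h • z.2) -
          (2 * ⟪xibar d ξ (Real.cos h • z.1 + Real.sin h • z.2),
                -Real.sin h • z.1 + Real.cos h • z.2⟫) •
            xibar d ξ (Real.cos h • z.1 + Real.sin h • z.2)))⟫ •
      xibar d ξ (Real.cos h • (Real.cos h • z.1 + Real.sin h • z.2) +
        Real.sin h • ((-Real.sin h • z.1 + Real.cos h • z.2) -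
          (2 * ⟪xibar d ξ (Real.cos h • z.1 + Real.sin h • z.2),
                -Real.sin h • z.1 + Real.cos h • z.2⟫) •
            xibar d ξ (Real.cos h • z.1 + Real.sin h • z.2))))

section Aux2
variable {d : ℕ} {ξ : EuclideanSpace ℝ (Fin d) → EuclideanSpace ℝ (Fin d)}

lemma weaveS_eq {z : EuclideanSpace ℝ (Fin d) × EuclideanSpace ℝ (Fin d)} {h : ℝ}
    (h1 : ξ (Real.cos h • z.1 + Real.sin h • z.2) ≠ 0) :
    weaveS d ξ z h = pbf d ξ (circleT d h (bounceT d ξ (circleT d h z))) := by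
  simp only [weaveS, pbf, circleT, bounceT, tangP, reflT, h1, ↓reduceIte]

lemma weaveS_zero {z : EuclideanSpace ℝ (Fin d) × EuclideanSpace ℝ (Fin d)}
    (h1 : ξ z.1 ≠ 0) : weaveS d ξ z 0 = pbf d ξ z := by
  have hee := inner_xibar_self (ξ := ξ) h1
  simp only [weaveS, pbf, tangP, Real.cos_zero, Real.sin_zero, one_smul, zero_smul, neg_zero,
    add_zero, zero_add]
  refine Prod.ext rfl ?_
  simp only [inner_sub_right, real_inner_smul_right, hee, mul_one]
  module

lemma hasDerivAt_weaveS (hξ : ContDiff ℝ 2 ξ) {x v : EuclideanSpace ℝ (Fin d)}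
    (hx : ξ x ≠ 0) :
    HasDerivAt (fun h => weaveS d ξ (x, v) h)
      (atilde d ξ x v + ((0 : EuclideanSpace ℝ (Fin d)), btilde d ξ x v)) 0 := by
  have hdiff : DifferentiableAt ℝ (xibar d ξ) x :=
    (xibar_contDiffAt hξ hx).differentiableAt (by norm_num)
  set e := xibar d ξ x with he_def
  set D := fderiv ℝ (xibar d ξ) x with hD_def
  have hDf : HasFDerivAt (xibar d ξ) D x := hdiff.hasFDerivAt
  have hcos : HasDerivAt Real.cos (0 : ℝ) 0 := by simpa using Real.hasDerivAt_cos 0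
  have hsin : HasDerivAt Real.sin (1 : ℝ) 0 := by simpa using Real.hasDerivAt_sin 0
  have hx1 : HasDerivAt (fun h : ℝ => Real.cos h • x + Real.sin h • v) v 0 := by
    simpa using (hcos.smul_const x).fun_add (hsin.smul_const v)
  have hv1 : HasDerivAt (fun h : ℝ => -Real.sin h • x + Real.cos h • v) (-x) 0 := by
    simpa using ((hsin.fun_neg).smul_const x).fun_add (hcos.smul_const v)
  have hx10 : Real.cos 0 • x + Real.sin 0 • v = x := by simp
  have hDf1 : HasFDerivAt (xibar d ξ) D (Real.cos 0 • x + Real.sin 0 • v) := by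
    rw [hx10]; exact hDf
  have he1 : HasDerivAt (fun h : ℝ => xibar d ξ (Real.cos h • x + Real.sin h • v)) (D v) 0 := by
    simpa [Function.comp_def] using hDf1.comp_hasDerivAt 0 hx1
  have hip1 : HasDerivAt (fun h : ℝ => ⟪xibar d ξ (Real.cos h • x + Real.sin h • v),
      -Real.sin h • x + Real.cos h • v⟫) (-⟪e, x⟫ + ⟪D v, v⟫) 0 := by
    simpa using he1.inner ℝ hv1
  have hw : HasDerivAt (fun h : ℝ => (-Real.sin h • x + Real.cos h • v) -
      (2 * ⟪xibar d ξ (Real.cos h • x + Real.sin h • v), -Real.sin h • x + Real.cos h • v⟫) •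
        xibar d ξ (Real.cos h • x + Real.sin h • v))
      (-x - ((2 * ⟪e, v⟫) • D v + (2 * (-⟪e, x⟫ + ⟪D v, v⟫)) • e)) 0 := by
    simpa using hv1.fun_sub ((hip1.const_mul (2 : ℝ)).fun_smul he1)
  have hx2 : HasDerivAt (fun h : ℝ => Real.cos h • (Real.cos h • x + Real.sin h • v) +
      Real.sin h • ((-Real.sin h • x + Real.cos h • v) -
        (2 * ⟪xibar d ξ (Real.cos h • x + Real.sin h • v),
          -Real.sin h • x + Real.cos h • v⟫) • xibar d ξ (Real.cos h • x + Real.sin h • v)))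
      (v + (v - (2 * ⟪e, v⟫) • e)) 0 := by
    simpa using (hcos.fun_smul hx1).fun_add (hsin.fun_smul hw)
  have hv2 : HasDerivAt (fun h : ℝ => -Real.sin h • (Real.cos h • x + Real.sin h • v) +
      Real.cos h • ((-Real.sin h • x + Real.cos h • v) -
        (2 * ⟪xibar d ξ (Real.cos h • x + Real.sin h • v),
          -Real.sin h • x + Real.cos h • v⟫) • xibar d ξ (Real.cos h • x + Real.sin h • v)))
      (-x + (-x - ((2 * ⟪e, v⟫) • D v + (2 * (-⟪e, x⟫ + ⟪D v, v⟫)) • e))) 0 := by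
    simpa using ((hsin.fun_neg).fun_smul hx1).fun_add (hcos.fun_smul hw)
  have hX20 : Real.cos 0 • (Real.cos 0 • x + Real.sin 0 • v) +
      Real.sin 0 • ((-Real.sin 0 • x + Real.cos 0 • v) -
        (2 * ⟪xibar d ξ (Real.cos 0 • x + Real.sin 0 • v),
          -Real.sin 0 • x + Real.cos 0 • v⟫) • xibar d ξ (Real.cos 0 • x + Real.sin 0 • v)) = x := by
    simp
  have hDf2 : HasFDerivAt (xibar d ξ) D (Real.cos 0 • (Real.cos 0 • x + Real.sin 0 • v) +
      Real.sin 0 • ((-Real.sin 0 • x + Real.cos 0 • v) -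
        (2 * ⟪xibar d ξ (Real.cos 0 • x + Real.sin 0 • v),
          -Real.sin 0 • x + Real.cos 0 • v⟫) • xibar d ξ (Real.cos 0 • x + Real.sin 0 • v))) := by
    rw [hX20]; exact hDf
  have he2 : HasDerivAt (fun h : ℝ => xibar d ξ (Real.cos h • (Real.cos h • x + Real.sin h • v) +
      Real.sin h • ((-Real.sin h • x + Real.cos h • v) -
        (2 * ⟪xibar d ξ (Real.cos h • x + Real.sin h • v),
          -Real.sin h • x + Real.cos h • v⟫) • xibar d ξ (Real.cos h • x + Real.sin h • v))))
      (D (v + (v - (2 * ⟪e, v⟫) • e))) 0 := by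
    simpa [Function.comp_def] using hDf2.comp_hasDerivAt 0 hx2
  have hip2 := he2.inner ℝ hv2
  have hfin2 := hv2.fun_sub (hip2.fun_smul he2)
  have hbig := hx2.prodMk hfin2

  simp only [Real.cos_zero, Real.sin_zero, one_smul, zero_smul, neg_zero, smul_zero,
    zero_add, add_zero, zero_sub, sub_zero] at hbig
  have h1 : ∀ u, ⟪e, D u⟫ = 0 := fun u => inner_xibar_fderiv hξ hx u
  have h2 : ∀ u, ⟪D u, e⟫ = 0 := fun u => (real_inner_comm _ _).trans (h1 u)
  have hee : ⟪e, e⟫ = (1 : ℝ) := inner_xibar_self hx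
  have h3 : ⟪D v, v⟫ = ⟪v, D v⟫ := real_inner_comm _ _
  have h4 : ⟪D e, v⟫ = ⟪v, D e⟫ := real_inner_comm _ _
  have halg : atilde d ξ x v + ((0 : EuclideanSpace ℝ (Fin d)), btilde d ξ x v) =
      (v + (v - (2 * ⟪e, v⟫) • e),
        -x + (-x - ((2 * ⟪e, v⟫) • D v + (2 * (-⟪e, x⟫ + ⟪D v, v⟫)) • e)) -
          (⟪e, v - (2 * ⟪e, v⟫) • e⟫ • D (v + (v - (2 * ⟪e, v⟫) • e)) +
            (⟪e, -x + (-x - ((2 * ⟪e, v⟫) • D v + (2 * (-⟪e, x⟫ + ⟪D v, v⟫)) • e))⟫ +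
                ⟪D (v + (v - (2 * ⟪e, v⟫) • e)), v - (2 * ⟪e, v⟫) • e⟫) • e)) := by
    simp only [atilde, btilde, tangP, dxib, reflT, if_neg hx, ← he_def, ← hD_def,
      Prod.mk_add_mk, Prod.mk.injEq]
    constructor
    · module
    · simp only [inner_add_right, inner_sub_right, real_inner_smul_right, inner_neg_right,
        inner_add_left, inner_sub_left, real_inner_smul_left, inner_neg_left,
        map_add, map_sub, _root_.map_smul, hee, h1, h2, h3, h4, mul_one]
      module
  rw [halg]
  exact hbig

end Aux2

noncomputable def wX1 (d : ℕ) (p : (EuclideanSpace ℝ (Fin d) × EuclideanSpace ℝ (Fin d)) × ℝ) :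
    EuclideanSpace ℝ (Fin d) := Real.cos p.2 • p.1.1 + Real.sin p.2 • p.1.2

noncomputable def wV1 (d : ℕ) (p : (EuclideanSpace ℝ (Fin d) × EuclideanSpace ℝ (Fin d)) × ℝ) :
    EuclideanSpace ℝ (Fin d) := -Real.sin p.2 • p.1.1 + Real.cos p.2 • p.1.2

noncomputable def wW (d : ℕ) (ξ : EuclideanSpace ℝ (Fin d) → EuclideanSpace ℝ (Fin d))
    (p : (EuclideanSpace ℝ (Fin d) × EuclideanSpace ℝ (Fin d)) × ℝ) :
    EuclideanSpace ℝ (Fin d) :=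
  wV1 d p - (2 * ⟪xibar d ξ (wX1 d p), wV1 d p⟫) • xibar d ξ (wX1 d p)

noncomputable def wX2 (d : ℕ) (ξ : EuclideanSpace ℝ (Fin d) → EuclideanSpace ℝ (Fin d))
    (p : (EuclideanSpace ℝ (Fin d) × EuclideanSpace ℝ (Fin d)) × ℝ) :
    EuclideanSpace ℝ (Fin d) := Real.cos p.2 • wX1 d p + Real.sin p.2 • wW d ξ p

noncomputable def wV2 (d : ℕ) (ξ : EuclideanSpace ℝ (Fin d) → EuclideanSpace ℝ (Fin d))
    (p : (EuclideanSpace ℝ (Fin d) × EuclideanSpace ℝ (Fin d)) × ℝ) :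
    EuclideanSpace ℝ (Fin d) := -Real.sin p.2 • wX1 d p + Real.cos p.2 • wW d ξ p

section Aux3
variable {d : ℕ} {ξ : EuclideanSpace ℝ (Fin d) → EuclideanSpace ℝ (Fin d)}

lemma weaveS_def' (z : EuclideanSpace ℝ (Fin d) × EuclideanSpace ℝ (Fin d)) (h : ℝ) :
    weaveS d ξ z h = (wX2 d ξ (z, h),
      wV2 d ξ (z, h) - ⟪xibar d ξ (wX2 d ξ (z, h)), wV2 d ξ (z, h)⟫ • xibar d ξ (wX2 d ξ (z, h))) :=
  rfl

lemma contDiff_wX1 : ContDiff ℝ 2 (wX1 d) :=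
  ((Real.contDiff_cos.comp contDiff_snd).smul contDiff_fst.fst).add
    ((Real.contDiff_sin.comp contDiff_snd).smul contDiff_fst.snd)

lemma contDiff_wV1 : ContDiff ℝ 2 (wV1 d) :=
  (((Real.contDiff_sin.comp contDiff_snd).neg).smul contDiff_fst.fst).add
    ((Real.contDiff_cos.comp contDiff_snd).smul contDiff_fst.snd)

lemma contDiffAt_wW (hξ : ContDiff ℝ 2 ξ)
    {p : (EuclideanSpace ℝ (Fin d) × EuclideanSpace ℝ (Fin d)) × ℝ}
    (h1 : ξ (wX1 d p) ≠ 0) : ContDiffAt ℝ 2 (wW d ξ) p := by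
  have hxb : ContDiffAt ℝ 2 (fun q => xibar d ξ (wX1 d q)) p :=
    (xibar_contDiffAt hξ h1).comp p contDiff_wX1.contDiffAt
  exact contDiff_wV1.contDiffAt.sub
    ((contDiffAt_const.mul (hxb.inner ℝ contDiff_wV1.contDiffAt)).smul hxb)

lemma contDiffAt_wX2 (hξ : ContDiff ℝ 2 ξ)
    {p : (EuclideanSpace ℝ (Fin d) × EuclideanSpace ℝ (Fin d)) × ℝ}
    (h1 : ξ (wX1 d p) ≠ 0) : ContDiffAt ℝ 2 (wX2 d ξ) p :=
  (((Real.contDiff_cos.comp contDiff_snd).smul contDiff_wX1).contDiffAt).add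
    (((Real.contDiff_sin.comp contDiff_snd).contDiffAt).smul (contDiffAt_wW hξ h1))

lemma contDiffAt_wV2 (hξ : ContDiff ℝ 2 ξ)
    {p : (EuclideanSpace ℝ (Fin d) × EuclideanSpace ℝ (Fin d)) × ℝ}
    (h1 : ξ (wX1 d p) ≠ 0) : ContDiffAt ℝ 2 (wV2 d ξ) p :=
  ((((Real.contDiff_sin.comp contDiff_snd).neg).smul contDiff_wX1).contDiffAt).add
    (((Real.contDiff_cos.comp contDiff_snd).contDiffAt).smul (contDiffAt_wW hξ h1))

lemma contDiffAt_weaveS (hξ : ContDiff ℝ 2 ξ)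
    {p : (EuclideanSpace ℝ (Fin d) × EuclideanSpace ℝ (Fin d)) × ℝ}
    (h1 : ξ (wX1 d p) ≠ 0) (h2 : ξ (wX2 d ξ p) ≠ 0) :
    ContDiffAt ℝ 2 (fun q => weaveS d ξ q.1 q.2) p := by
  have hxb2 : ContDiffAt ℝ 2 (fun q => xibar d ξ (wX2 d ξ q)) p :=
    (xibar_contDiffAt hξ h2).comp p (contDiffAt_wX2 hξ h1)
  have := (contDiffAt_wX2 hξ h1).prodMk ((contDiffAt_wV2 hξ h1).sub
    ((hxb2.inner ℝ (contDiffAt_wV2 hξ h1)).smul hxb2))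
  exact this.congr_of_eventuallyEq (Filter.Eventually.of_forall fun q => weaveS_def' q.1 q.2)

lemma continuousOn_xibar (hξ : ContDiff ℝ 2 ξ) :
    ContinuousOn (xibar d ξ) {y | ξ y ≠ 0} := fun y hy =>
  ((xibar_contDiffAt hξ hy).continuousAt).continuousWithinAt

lemma norm_tangP_le (x v : EuclideanSpace ℝ (Fin d)) : ‖tangP d ξ x v‖ ≤ 2 * ‖v‖ := by
  have h1 : |⟪xibar d ξ x, v⟫| ≤ ‖v‖ := by
    calc |⟪xibar d ξ x, v⟫| ≤ ‖xibar d ξ x‖ * ‖v‖ := abs_real_inner_le_norm _ _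
    _ ≤ 1 * ‖v‖ := by have := norm_xibar_le_one (ξ := ξ) x; nlinarith [norm_nonneg v]
    _ = ‖v‖ := one_mul _
  calc ‖tangP d ξ x v‖ ≤ ‖v‖ + ‖⟪xibar d ξ x, v⟫ • xibar d ξ x‖ := norm_sub_le _ _
  _ ≤ ‖v‖ + |⟪xibar d ξ x, v⟫| * 1 := by
      rw [norm_smul]
      have := norm_xibar_le_one (ξ := ξ) x
      have := abs_nonneg ⟪xibar d ξ x, v⟫
      gcongr
      exact (Real.norm_eq_abs _).le
  _ ≤ 2 * ‖v‖ := by nlinarith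
lemma norm_reflT_le (x v : EuclideanSpace ℝ (Fin d)) : ‖reflT d ξ x v‖ ≤ 3 * ‖v‖ := by
  rw [reflT]
  split
  · simp; linarith [norm_nonneg v]
  · have h1 : |⟪xibar d ξ x, v⟫| ≤ ‖v‖ := by
      calc |⟪xibar d ξ x, v⟫| ≤ ‖xibar d ξ x‖ * ‖v‖ := abs_real_inner_le_norm _ _
      _ ≤ 1 * ‖v‖ := by have := norm_xibar_le_one (ξ := ξ) x; nlinarith [norm_nonneg v]
      _ = ‖v‖ := one_mul _
    calc ‖v - (2 * ⟪xibar d ξ x, v⟫) • xibar d ξ x‖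
        ≤ ‖v‖ + ‖(2 * ⟪xibar d ξ x, v⟫) • xibar d ξ x‖ := norm_sub_le _ _
    _ ≤ ‖v‖ + |2 * ⟪xibar d ξ x, v⟫| * 1 := by
        rw [norm_smul]
        have := abs_nonneg (2 * ⟪xibar d ξ x, v⟫)
        gcongr
        · exact (Real.norm_eq_abs _).le
        exact norm_xibar_le_one x
    _ ≤ 3 * ‖v‖ := by rw [abs_mul]; simp only [abs_two]; nlinarith

lemma abs_cos_sub_one_le (h : ℝ) : |Real.cos h - 1| ≤ h ^ 2 / 2 := by
  have h1 := Real.one_sub_sq_div_two_le_cos (x := h)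
  have h2 := Real.cos_le_one h
  rw [abs_le]; constructor <;> nlinarith

lemma circleT_norm_fst (h : ℝ) (z : EuclideanSpace ℝ (Fin d) × EuclideanSpace ℝ (Fin d)) :
    ‖(circleT d h z).1‖ ≤ ‖z.1‖ + ‖z.2‖ := by
  rw [circleT]
  calc ‖Real.cos h • z.1 + Real.sin h • z.2‖ ≤ ‖Real.cos h • z.1‖ + ‖Real.sin h • z.2‖ :=
        norm_add_le _ _
  _ = |Real.cos h| * ‖z.1‖ + |Real.sin h| * ‖z.2‖ := by
      rw [norm_smul, norm_smul, Real.norm_eq_abs, Real.norm_eq_abs]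
  _ ≤ ‖z.1‖ + ‖z.2‖ := by
      have := Real.abs_cos_le_one h; have := Real.abs_sin_le_one h
      have := norm_nonneg z.1; have := norm_nonneg z.2
      have := abs_nonneg (Real.cos h); have := abs_nonneg (Real.sin h)
      nlinarith

lemma circleT_norm_snd (h : ℝ) (z : EuclideanSpace ℝ (Fin d) × EuclideanSpace ℝ (Fin d)) :
    ‖(circleT d h z).2‖ ≤ ‖z.1‖ + ‖z.2‖ := by
  rw [circleT]
  calc ‖-Real.sin h • z.1 + Real.cos h • z.2‖ ≤ ‖-Real.sin h • z.1‖ + ‖Real.cos h • z.2‖ :=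
        norm_add_le _ _
  _ = |(-Real.sin h)| * ‖z.1‖ + |Real.cos h| * ‖z.2‖ := by
      rw [norm_smul, norm_smul, Real.norm_eq_abs, Real.norm_eq_abs]
  _ ≤ ‖z.1‖ + ‖z.2‖ := by
      have := Real.abs_cos_le_one h; have := Real.abs_sin_le_one h
      have h9 : |(-Real.sin h)| = |Real.sin h| := abs_neg _
      have := norm_nonneg z.1; have := norm_nonneg z.2
      have := abs_nonneg (Real.cos h); have := abs_nonneg (Real.sin h)
      nlinarith

end Aux3


set_option maxHeartbeats 4000000 in
/-- Short-time expansion of the Weave transform: on `{|z| ≤ r} ∩ (ℳ_α^{ε/2} × ℝ^d)`,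
`𝐩(φ_h(z)) = 𝐩(z) + h(ã(z) + (0, b̃(z))) + O(h²)` uniformly. -/
theorem stmt_13 (d : ℕ) (U : EuclideanSpace ℝ (Fin d) → ℝ)
    (ξ : EuclideanSpace ℝ (Fin d) → EuclideanSpace ℝ (Fin d))
    (hgrad : ∀ x, HasGradientAt U (ξ x) x) (hξ_C2 : ContDiff ℝ 2 ξ)
    (α r : ℝ) (hr : 0 < r)
    (hne : (Mlevel d U α ∩ {x | ξ x ≠ 0}).Nonempty)
    (ε : ℝ) (hε : 0 < ε) (hεsub : Mpert d U α ε ⊆ {x | ξ x ≠ 0}) :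
    -- the constant `C(r)` of the potential-energy deviation lemma
    let Cr : ℝ := r * (⨆ y : Metric.closedBall (0 : EuclideanSpace ℝ (Fin d)) r, ‖ξ ↑y‖)
      + r ^ 2 * (⨆ y : Metric.closedBall (0 : EuclideanSpace ℝ (Fin d)) r, ‖fderiv ℝ ξ ↑y‖)
    ∃ C : ℝ, 0 < C ∧
      ∀ (z : EuclideanSpace ℝ (Fin d) × EuclideanSpace ℝ (Fin d)) (h : ℝ),
        ‖z.1‖ ^ 2 + ‖z.2‖ ^ 2 ≤ r ^ 2 → z.1 ∈ Mpert d U α (ε / 2) →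
        0 < h → h < min (ε / r) (Real.sqrt (ε / (2 * Cr))) →
        ‖pbf d ξ (circleT d h (bounceT d ξ (circleT d h z))) - pbf d ξ z
            - h • (atilde d ξ z.1 z.2 + ((0 : EuclideanSpace ℝ (Fin d)), btilde d ξ z.1 z.2))‖
          ≤ h ^ 2 * C := by
  intro Cr
  classical
  have hξc : Continuous ξ := hξ_C2.continuous
  have hNcopen : IsOpen {y | ξ y ≠ 0} := isOpen_ne_zero hξ_C2
  have hUdiff : Differentiable ℝ U := fun y => (hgrad y).hasFDerivAt.differentiableAt
  have hUc : Continuous U := hUdiff.continuous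
  set K0 : Set (EuclideanSpace ℝ (Fin d) × EuclideanSpace ℝ (Fin d)) :=
    {z | ‖z.1‖ ^ 2 + ‖z.2‖ ^ 2 ≤ r ^ 2 ∧ z.1 ∈ Mpert d U α (ε / 2)} with hK0def
  set K := closure K0 with hKdef
  have hK0ball : K0 ⊆ Metric.closedBall 0 r := by
    intro z hz
    rw [Metric.mem_closedBall, dist_zero_right, Prod.norm_def]
    have h1 : ‖z.1‖ ≤ r := by nlinarith [hz.1, norm_nonneg z.1, norm_nonneg z.2, hr.le]
    have h2 : ‖z.2‖ ≤ r := by nlinarith [hz.1, norm_nonneg z.1, norm_nonneg z.2, hr.le]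
    exact max_le h1 h2
  have hKball : K ⊆ Metric.closedBall 0 r :=
    closure_minimal hK0ball Metric.isClosed_closedBall
  have hKcpt : IsCompact K :=
    (isCompact_closedBall 0 r).of_isClosed_subset isClosed_closure hKball
  have hKprop : ∀ z ∈ K, ‖z.1‖ ≤ r ∧ ‖z.2‖ ≤ r ∧
      ∃ y, ‖z.1 - y‖ ≤ 3 * ε / 4 ∧ |U y - α| ≤ ε / 2 := by
    intro z hz
    have hzb := hKball hz
    rw [Metric.mem_closedBall, dist_zero_right] at hzb
    refine ⟨le_trans (norm_fst_le z) hzb, le_trans (norm_snd_le z) hzb, ?_⟩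
    obtain ⟨w, hwK, hwd⟩ := Metric.mem_closure_iff.mp hz (ε / 4) (by linarith)
    obtain ⟨y, hy1, hy2⟩ := hwK.2
    refine ⟨y, ?_, hy2⟩
    have h3 : ‖z.1 - w.1‖ ≤ dist z w := by
      rw [dist_eq_norm]
      exact le_trans (le_of_eq (by rfl)) (norm_fst_le (z - w))
    calc ‖z.1 - y‖ ≤ ‖z.1 - w.1‖ + ‖w.1 - y‖ := by
          simpa using norm_add_le (z.1 - w.1) (w.1 - y)
    _ ≤ ε / 4 + ε / 2 := by have := hwd.le; gcongr <;> linarith [h3, hwd.le]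
    _ ≤ 3 * ε / 4 := by linarith
  set h0 : ℝ := min (ε / (64 * r)) 1 with hh0def
  have hh0pos : 0 < h0 := lt_min (by positivity) one_pos
  have hh0le1 : h0 ≤ 1 := min_le_right _ _
  have hh0leε : h0 * r ≤ ε / 64 := by
    rw [hh0def]
    calc min (ε / (64 * r)) 1 * r ≤ ε / (64 * r) * r := by
          have := min_le_left (ε / (64 * r)) 1; gcongr
    _ = ε / 64 := by field_simp
  have hdom : ∀ z ∈ K, ∀ t ∈ Set.Icc (0 : ℝ) h0,
      ξ (wX1 d (z, t)) ≠ 0 ∧ ξ (wX2 d ξ (z, t)) ≠ 0 := by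
    intro z hz t ht
    obtain ⟨hz1, hz2, y, hy1, hy2⟩ := hKprop z hz
    obtain ⟨ht0, hth0⟩ := ht
    have htr : t * r ≤ ε / 64 := by
      calc t * r ≤ h0 * r := by gcongr
      _ ≤ ε / 64 := hh0leε
    have ht1 : t ≤ 1 := le_trans hth0 hh0le1
    have hcos := abs_cos_sub_one_le t
    have hsin := Real.abs_sin_le_abs (x := t)
    rw [abs_of_nonneg ht0] at hsin
    have hcos' : |Real.cos t - 1| ≤ t / 2 := by nlinarith
    have hn1 : ‖wX1 d (z, t) - z.1‖ ≤ 3 / 2 * (t * r) := by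
      have heq : wX1 d (z, t) - z.1 = (Real.cos t - 1) • z.1 + Real.sin t • z.2 := by
        rw [wX1]; module
      rw [heq]
      calc ‖(Real.cos t - 1) • z.1 + Real.sin t • z.2‖
          ≤ ‖(Real.cos t - 1) • z.1‖ + ‖Real.sin t • z.2‖ := norm_add_le _ _
      _ = |Real.cos t - 1| * ‖z.1‖ + |Real.sin t| * ‖z.2‖ := by
          rw [norm_smul, norm_smul, Real.norm_eq_abs, Real.norm_eq_abs]
      _ ≤ t / 2 * r + t * r := by
          have h1 := abs_nonneg (Real.cos t - 1); have h2 := abs_nonneg (Real.sin t)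
          have h3 := norm_nonneg z.1; have h4 := norm_nonneg z.2
          have h5 : |Real.sin t| ≤ t := hsin
          nlinarith
      _ ≤ 3 / 2 * (t * r) := by nlinarith
    have hX1ne : ξ (wX1 d (z, t)) ≠ 0 := by
      apply hεsub
      exact ⟨y, by
        calc ‖wX1 d (z, t) - y‖ ≤ ‖wX1 d (z, t) - z.1‖ + ‖z.1 - y‖ := by
              simpa using norm_add_le (wX1 d (z, t) - z.1) (z.1 - y)
        _ ≤ 3 / 2 * (t * r) + 3 * ε / 4 := by gcongr
        _ ≤ ε := by nlinarith, by linarith⟩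
    refine ⟨hX1ne, ?_⟩
    have hnx1 : ‖wX1 d (z, t)‖ ≤ 2 * r := by
      calc ‖wX1 d (z, t)‖ ≤ ‖Real.cos t • z.1‖ + ‖Real.sin t • z.2‖ := norm_add_le _ _
      _ = |Real.cos t| * ‖z.1‖ + |Real.sin t| * ‖z.2‖ := by
          rw [norm_smul, norm_smul, Real.norm_eq_abs, Real.norm_eq_abs]
      _ ≤ 1 * r + 1 * r := by
          have := Real.abs_cos_le_one t; have := Real.abs_sin_le_one t
          have := norm_nonneg z.1; have := norm_nonneg z.2
          nlinarith
      _ = 2 * r := by ring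
    have hnv1 : ‖wV1 d (z, t)‖ ≤ 2 * r := by
      calc ‖wV1 d (z, t)‖ ≤ ‖-Real.sin t • z.1‖ + ‖Real.cos t • z.2‖ := norm_add_le _ _
      _ = |(-Real.sin t)| * ‖z.1‖ + |Real.cos t| * ‖z.2‖ := by
          rw [norm_smul, norm_smul, Real.norm_eq_abs, Real.norm_eq_abs]
      _ ≤ 1 * r + 1 * r := by
          have := Real.abs_cos_le_one t; have := Real.abs_sin_le_one t
          have h9 : |(-Real.sin t)| = |Real.sin t| := abs_neg _
          have := norm_nonneg z.1; have := norm_nonneg z.2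
          nlinarith
      _ = 2 * r := by ring
    have hnw : ‖wW d ξ (z, t)‖ ≤ 6 * r := by
      have heq : wW d ξ (z, t) = reflT d ξ (wX1 d (z, t)) (wV1 d (z, t)) := by
        rw [reflT, if_neg hX1ne]; rfl
      rw [heq]
      calc ‖reflT d ξ (wX1 d (z, t)) (wV1 d (z, t))‖ ≤ 3 * ‖wV1 d (z, t)‖ := norm_reflT_le _ _
      _ ≤ 6 * r := by linarith
    have hn2 : ‖wX2 d ξ (z, t) - wX1 d (z, t)‖ ≤ 7 * (t * r) := by
      have heq : wX2 d ξ (z, t) - wX1 d (z, t) =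
          (Real.cos t - 1) • wX1 d (z, t) + Real.sin t • wW d ξ (z, t) := by
        rw [wX2]; module
      rw [heq]
      calc ‖(Real.cos t - 1) • wX1 d (z, t) + Real.sin t • wW d ξ (z, t)‖
          ≤ ‖(Real.cos t - 1) • wX1 d (z, t)‖ + ‖Real.sin t • wW d ξ (z, t)‖ := norm_add_le _ _
      _ = |Real.cos t - 1| * ‖wX1 d (z, t)‖ + |Real.sin t| * ‖wW d ξ (z, t)‖ := by
          rw [norm_smul, norm_smul, Real.norm_eq_abs, Real.norm_eq_abs]
      _ ≤ t / 2 * (2 * r) + t * (6 * r) := by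
          have h1 := abs_nonneg (Real.cos t - 1); have h2 := abs_nonneg (Real.sin t)
          have := norm_nonneg (wX1 d (z, t)); have := norm_nonneg (wW d ξ (z, t))
          nlinarith
      _ ≤ 7 * (t * r) := by nlinarith
    apply hεsub
    exact ⟨y, by
      calc ‖wX2 d ξ (z, t) - y‖
          ≤ ‖wX2 d ξ (z, t) - wX1 d (z, t)‖ + (‖wX1 d (z, t) - z.1‖ + ‖z.1 - y‖) := by
            have t1 : wX2 d ξ (z, t) - y =
                (wX2 d ξ (z, t) - wX1 d (z, t)) + ((wX1 d (z, t) - z.1) + (z.1 - y)) := by abel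
            rw [t1]
            exact le_trans (norm_add_le _ _) (by gcongr; exact norm_add_le _ _)
      _ ≤ 7 * (t * r) + (3 / 2 * (t * r) + 3 * ε / 4) := by gcongr
      _ ≤ ε := by nlinarith, by linarith⟩
  set Ω : Set ((EuclideanSpace ℝ (Fin d) × EuclideanSpace ℝ (Fin d)) × ℝ) :=
    {p | ξ (wX1 d p) ≠ 0 ∧ ξ (wX2 d ξ p) ≠ 0} with hΩdef
  have hO1open : IsOpen {p : (EuclideanSpace ℝ (Fin d) × EuclideanSpace ℝ (Fin d)) × ℝ |
      ξ (wX1 d p) ≠ 0} := hNcopen.preimage contDiff_wX1.continuous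
  have hwx2cont : ContinuousOn (wX2 d ξ)
      {p : (EuclideanSpace ℝ (Fin d) × EuclideanSpace ℝ (Fin d)) × ℝ | ξ (wX1 d p) ≠ 0} := by
    have hxb : ContinuousOn (fun p => xibar d ξ (wX1 d p))
        {p : (EuclideanSpace ℝ (Fin d) × EuclideanSpace ℝ (Fin d)) × ℝ | ξ (wX1 d p) ≠ 0} :=
      (continuousOn_xibar hξ_C2).comp contDiff_wX1.continuous.continuousOn fun p hp => hp
    have hv1 : ContinuousOn (wV1 d)
        {p : (EuclideanSpace ℝ (Fin d) × EuclideanSpace ℝ (Fin d)) × ℝ | ξ (wX1 d p) ≠ 0} :=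
      contDiff_wV1.continuous.continuousOn
    have hw : ContinuousOn (wW d ξ)
        {p : (EuclideanSpace ℝ (Fin d) × EuclideanSpace ℝ (Fin d)) × ℝ | ξ (wX1 d p) ≠ 0} :=
      hv1.sub ((continuousOn_const.fun_mul (hxb.inner hv1)).fun_smul hxb)
    exact ((Real.continuous_cos.comp continuous_snd).continuousOn.smul
      contDiff_wX1.continuous.continuousOn).add
      ((Real.continuous_sin.comp continuous_snd).continuousOn.smul hw)
  have hΩopen : IsOpen Ω := by
    have h1 := hwx2cont.isOpen_inter_preimage hO1open hNcopen
    have h2 : Ω = {p : (EuclideanSpace ℝ (Fin d) × EuclideanSpace ℝ (Fin d)) × ℝ |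
        ξ (wX1 d p) ≠ 0} ∩ wX2 d ξ ⁻¹' {y | ξ y ≠ 0} := rfl
    rw [h2]; exact h1
  have hK'sub : K ×ˢ Set.Icc (0 : ℝ) h0 ⊆ Ω := by
    intro p hp
    have := hdom p.1 hp.1 p.2 hp.2
    exact this
  have hΦ : ContDiffOn ℝ 2 (fun q => weaveS d ξ q.1 q.2) Ω := fun p hp =>
    (contDiffAt_weaveS hξ_C2 hp.1 hp.2).contDiffWithinAt
  set Ψ : (EuclideanSpace ℝ (Fin d) × EuclideanSpace ℝ (Fin d)) × ℝ →
      EuclideanSpace ℝ (Fin d) × EuclideanSpace ℝ (Fin d) :=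
    fun p => fderiv ℝ (fun q => weaveS d ξ q.1 q.2) p
      ((0 : EuclideanSpace ℝ (Fin d) × EuclideanSpace ℝ (Fin d)), (1 : ℝ)) with hΨdef
  have hΨ : ContDiffOn ℝ 1 Ψ Ω :=
    (hΦ.fderiv_of_isOpen hΩopen (by norm_num)).clm_apply contDiffOn_const
  have hΨc : ContinuousOn (fderiv ℝ Ψ) Ω :=
    hΨ.continuousOn_fderiv_of_isOpen hΩopen le_rfl
  have hK'cpt : IsCompact (K ×ˢ Set.Icc (0 : ℝ) h0) := hKcpt.prod isCompact_Icc
  obtain ⟨M0, hM0⟩ := hK'cpt.exists_bound_of_continuousOn (hΨc.mono hK'sub)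
  set M : ℝ := max M0 0 with hMdef
  have hMnn : 0 ≤ M := le_max_right _ _
  have hΨd : ∀ p ∈ Ω, HasFDerivAt Ψ (fderiv ℝ Ψ p) p := fun p hp =>
    (((hΨ p hp).contDiffAt (hΩopen.mem_nhds hp)).differentiableAt one_ne_zero).hasFDerivAt
  have hΨlip : ∀ z ∈ K, ∀ t ∈ Set.Icc (0 : ℝ) h0, ‖Ψ (z, t) - Ψ (z, 0)‖ ≤ M * t := by
    intro z hz t ht
    have hS : ({z} ×ˢ Set.Icc (0 : ℝ) h0 : Set _) ⊆ Ω := fun p hp =>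
      hK'sub ⟨by simpa using hp.1 ▸ hz, hp.2⟩
    have hconv : Convex ℝ ({z} ×ˢ Set.Icc (0 : ℝ) h0 : Set _) :=
      (convex_singleton z).prod (convex_Icc 0 h0)
    have hbound : ∀ p ∈ ({z} ×ˢ Set.Icc (0 : ℝ) h0 : Set _), ‖fderiv ℝ Ψ p‖ ≤ M :=
      fun p hp => le_trans (hM0 p ⟨(by simpa using hp.1 ▸ hz), hp.2⟩) (le_max_left _ _)
    have h1 := Convex.norm_image_sub_le_of_norm_hasFDerivWithin_le
      (fun p hp => (hΨd p (hS hp)).hasFDerivWithinAt) hbound hconv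
      (x := (z, 0)) (y := (z, t)) (by exact ⟨rfl, Set.left_mem_Icc.2 hh0pos.le⟩)
      (by exact ⟨rfl, ht⟩)
    have h2 : ‖(z, t) - (z, 0)‖ = t := by
      rw [Prod.mk_sub_mk, Prod.norm_def]
      simp [Real.norm_eq_abs, abs_of_nonneg ht.1, ht.1]
    rw [h2] at h1
    exact h1
  have hTangent : ∀ z ∈ K, ∀ t ∈ Set.Icc (0 : ℝ) h0,
      HasDerivAt (fun s => weaveS d ξ z s) (Ψ (z, t)) t := by
    intro z hz t ht
    have hp : ((z, t) : (EuclideanSpace ℝ (Fin d) × EuclideanSpace ℝ (Fin d)) × ℝ) ∈ Ω :=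
      hK'sub ⟨hz, ht⟩
    have hdiffΦ := (((hΦ _ hp).contDiffAt (hΩopen.mem_nhds hp)).differentiableAt
      (by norm_num)).hasFDerivAt
    have hγ : HasDerivAt (fun s : ℝ => ((z, s) :
        (EuclideanSpace ℝ (Fin d) × EuclideanSpace ℝ (Fin d)) × ℝ))
        ((0 : EuclideanSpace ℝ (Fin d) × EuclideanSpace ℝ (Fin d)), (1 : ℝ)) t :=
      (hasDerivAt_const t z).prodMk (hasDerivAt_id t)
    exact hdiffΦ.comp_hasDerivAt t hγ
  have hz1ne : ∀ z ∈ K, ξ z.1 ≠ 0 := by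
    intro z hz
    have := (hdom z hz 0 (Set.left_mem_Icc.2 hh0pos.le)).1
    have heq : wX1 d (z, 0) = z.1 := by rw [wX1]; simp
    rwa [heq] at this
  have hΨ0 : ∀ z ∈ K, Ψ (z, 0) =
      atilde d ξ z.1 z.2 + ((0 : EuclideanSpace ℝ (Fin d)), btilde d ξ z.1 z.2) := by
    intro z hz
    have hT := hTangent z hz 0 (Set.left_mem_Icc.2 hh0pos.le)
    have hW := hasDerivAt_weaveS (d := d) (ξ := ξ) hξ_C2 (x := z.1) (v := z.2) (hz1ne z hz)
    have heq : (fun h => weaveS d ξ (z.1, z.2) h) = fun h => weaveS d ξ z h := by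
      rw [Prod.mk.eta]
    rw [heq] at hW
    exact hT.unique hW
  have hTaylor : ∀ z ∈ K, ∀ h : ℝ, 0 < h → h ≤ h0 →
      ‖weaveS d ξ z h - weaveS d ξ z 0 - h • Ψ (z, 0)‖ ≤ M * h ^ 2 := by
    intro z hz h hpos hle
    set g : ℝ → EuclideanSpace ℝ (Fin d) × EuclideanSpace ℝ (Fin d) :=
      fun t => weaveS d ξ z t - t • Ψ (z, 0) with hgdef
    have hg : ∀ t ∈ Set.Icc (0 : ℝ) h,
        HasDerivWithinAt g (Ψ (z, t) - Ψ (z, 0)) (Set.Icc 0 h) t := by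
      intro t ht
      have h1 := hTangent z hz t ⟨ht.1, le_trans ht.2 hle⟩
      have h2 : HasDerivAt (fun t : ℝ => t • Ψ (z, 0)) (Ψ (z, 0)) t := by
        simpa using (hasDerivAt_id t).smul_const (Ψ (z, 0))
      exact (h1.sub h2).hasDerivWithinAt
    have hb : ∀ t ∈ Set.Ico (0 : ℝ) h, ‖Ψ (z, t) - Ψ (z, 0)‖ ≤ M * h := by
      intro t ht
      calc ‖Ψ (z, t) - Ψ (z, 0)‖ ≤ M * t := hΨlip z hz t ⟨ht.1, le_trans ht.2.le hle⟩
      _ ≤ M * h := by nlinarith [ht.2.le, hMnn]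
    have hkey := norm_image_sub_le_of_norm_deriv_le_segment' hg hb h
      (Set.right_mem_Icc.2 hpos.le)
    have hg0 : g 0 = weaveS d ξ z 0 := by simp [hgdef]
    have heq : weaveS d ξ z h - weaveS d ξ z 0 - h • Ψ (z, 0) = g h - g 0 := by
      rw [hg0, hgdef]; exact sub_right_comm _ _ _
    rw [heq]
    calc ‖g h - g 0‖ ≤ M * h * (h - 0) := hkey
    _ = M * h ^ 2 := by ring
  have hxibarC2' : ContDiffOn ℝ 2 (xibar d ξ) {y | ξ y ≠ 0} := fun y hy =>
    (xibar_contDiffAt hξ_C2 hy).contDiffWithinAt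
  have hfdc : ContinuousOn (fun z : EuclideanSpace ℝ (Fin d) × EuclideanSpace ℝ (Fin d) =>
      fderiv ℝ (xibar d ξ) z.1) K :=
    (hxibarC2'.continuousOn_fderiv_of_isOpen hNcopen (by norm_num)).comp
      continuous_fst.continuousOn (fun z hz => hz1ne z hz)
  obtain ⟨M20, hM20⟩ := hKcpt.exists_bound_of_continuousOn hfdc
  set M2 : ℝ := max M20 0 with hM2def
  have hM2nn : 0 ≤ M2 := le_max_right _ _
  have hDop : ∀ z ∈ K, ∀ u, ‖fderiv ℝ (xibar d ξ) z.1 u‖ ≤ M2 * ‖u‖ := by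
    intro z hz u
    calc ‖fderiv ℝ (xibar d ξ) z.1 u‖ ≤ ‖fderiv ℝ (xibar d ξ) z.1‖ * ‖u‖ :=
          ContinuousLinearMap.le_opNorm _ _
    _ ≤ M2 * ‖u‖ := by
        have h1 := hM20 z hz
        have h2 := norm_nonneg u
        have h3 : ‖fderiv ℝ (xibar d ξ) z.1‖ ≤ M2 := le_trans h1 (le_max_left _ _)
        nlinarith
  have hinner_le : ∀ (x u : EuclideanSpace ℝ (Fin d)), |⟪xibar d ξ x, u⟫| ≤ ‖u‖ := by
    intro x u
    calc |⟪xibar d ξ x, u⟫| ≤ ‖xibar d ξ x‖ * ‖u‖ := abs_real_inner_le_norm _ _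
    _ ≤ ‖u‖ := by have := norm_xibar_le_one (ξ := ξ) x; nlinarith [norm_nonneg u]
  have hAbound : ∀ z ∈ K, ‖atilde d ξ z.1 z.2 +
      ((0 : EuclideanSpace ℝ (Fin d)), btilde d ξ z.1 z.2)‖ ≤ 4 * r + 20 * M2 * r ^ 2 := by
    intro z hz
    obtain ⟨h1r, h2r, -⟩ := hKprop z hz
    have hpair : atilde d ξ z.1 z.2 + ((0 : EuclideanSpace ℝ (Fin d)), btilde d ξ z.1 z.2)
        = ((2 : ℝ) • tangP d ξ z.1 z.2,
           (-2 : ℝ) • tangP d ξ z.1 z.1 + btilde d ξ z.1 z.2) := by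
      rw [atilde, Prod.mk_add_mk, add_zero]
    have htp2 : ‖tangP d ξ z.1 z.2‖ ≤ 2 * r :=
      le_trans (norm_tangP_le _ _) (by nlinarith)
    have htp1 : ‖tangP d ξ z.1 z.1‖ ≤ 2 * r :=
      le_trans (norm_tangP_le _ _) (by nlinarith)
    have hRv : ‖reflT d ξ z.1 z.2‖ ≤ 3 * r := le_trans (norm_reflT_le _ _) (by nlinarith)
    have hbt : ‖btilde d ξ z.1 z.2‖ ≤ 20 * M2 * r ^ 2 := by
      rw [btilde]
      have hb1 : ‖(-⟪xibar d ξ z.1, z.2⟫) • fderiv ℝ (xibar d ξ) z.1 z.2‖ ≤ r * (M2 * r) := by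
        rw [norm_smul, Real.norm_eq_abs, abs_neg]
        have hA : |⟪xibar d ξ z.1, z.2⟫| ≤ r := le_trans (hinner_le z.1 z.2) h2r
        have hB : ‖fderiv ℝ (xibar d ξ) z.1 z.2‖ ≤ M2 * r :=
          le_trans (hDop z hz z.2) (mul_le_mul_of_nonneg_left h2r hM2nn)
        exact mul_le_mul hA hB (norm_nonneg _) hr.le
      have hb2 : ‖dxib d ξ z.1 z.2 z.2 • xibar d ξ z.1‖ ≤ r * (M2 * r) := by
        rw [norm_smul, Real.norm_eq_abs, dxib]
        have h1 : |⟪z.2, fderiv ℝ (xibar d ξ) z.1 z.2⟫| ≤ ‖z.2‖ * (M2 * r) := by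
          calc |⟪z.2, fderiv ℝ (xibar d ξ) z.1 z.2⟫|
              ≤ ‖z.2‖ * ‖fderiv ℝ (xibar d ξ) z.1 z.2‖ := abs_real_inner_le_norm _ _
          _ ≤ ‖z.2‖ * (M2 * r) := mul_le_mul_of_nonneg_left
                (le_trans (hDop z hz z.2) (mul_le_mul_of_nonneg_left h2r hM2nn))
                (norm_nonneg z.2)
        have h5 := norm_xibar_le_one (ξ := ξ) z.1
        have hA : |⟪z.2, fderiv ℝ (xibar d ξ) z.1 z.2⟫| ≤ r * (M2 * r) :=
          le_trans h1 (mul_le_mul_of_nonneg_right h2r (by positivity))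
        calc |⟪z.2, fderiv ℝ (xibar d ξ) z.1 z.2⟫| * ‖xibar d ξ z.1‖
            ≤ r * (M2 * r) * 1 := mul_le_mul hA h5 (norm_nonneg _) (by positivity)
        _ = r * (M2 * r) := mul_one _
      have hb3 : ‖(-⟪xibar d ξ z.1, reflT d ξ z.1 z.2⟫) •
          fderiv ℝ (xibar d ξ) z.1 (reflT d ξ z.1 z.2)‖ ≤ 3 * r * (M2 * (3 * r)) := by
        rw [norm_smul, Real.norm_eq_abs, abs_neg]
        have hA : |⟪xibar d ξ z.1, reflT d ξ z.1 z.2⟫| ≤ 3 * r :=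
          le_trans (hinner_le z.1 _) hRv
        have hB : ‖fderiv ℝ (xibar d ξ) z.1 (reflT d ξ z.1 z.2)‖ ≤ M2 * (3 * r) :=
          le_trans (hDop z hz _) (mul_le_mul_of_nonneg_left hRv hM2nn)
        exact mul_le_mul hA hB (norm_nonneg _) (by positivity)
      have hb4 : ‖dxib d ξ z.1 (reflT d ξ z.1 z.2) (reflT d ξ z.1 z.2) • xibar d ξ z.1‖
          ≤ 3 * r * (M2 * (3 * r)) := by
        rw [norm_smul, Real.norm_eq_abs, dxib]
        have h1 : |⟪reflT d ξ z.1 z.2, fderiv ℝ (xibar d ξ) z.1 (reflT d ξ z.1 z.2)⟫|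
            ≤ 3 * r * (M2 * (3 * r)) := by
          calc |⟪reflT d ξ z.1 z.2, fderiv ℝ (xibar d ξ) z.1 (reflT d ξ z.1 z.2)⟫|
              ≤ ‖reflT d ξ z.1 z.2‖ * ‖fderiv ℝ (xibar d ξ) z.1 (reflT d ξ z.1 z.2)‖ :=
                abs_real_inner_le_norm _ _
          _ ≤ 3 * r * (M2 * (3 * r)) := mul_le_mul hRv
                (le_trans (hDop z hz _) (mul_le_mul_of_nonneg_left hRv hM2nn))
                (norm_nonneg _) (by positivity)
        have h5 := norm_xibar_le_one (ξ := ξ) z.1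
        calc |⟪reflT d ξ z.1 z.2, fderiv ℝ (xibar d ξ) z.1 (reflT d ξ z.1 z.2)⟫|
              * ‖xibar d ξ z.1‖
            ≤ 3 * r * (M2 * (3 * r)) * 1 := mul_le_mul h1 h5 (norm_nonneg _) (by positivity)
        _ = 3 * r * (M2 * (3 * r)) := mul_one _
      calc ‖(-⟪xibar d ξ z.1, z.2⟫) • fderiv ℝ (xibar d ξ) z.1 z.2
            - dxib d ξ z.1 z.2 z.2 • xibar d ξ z.1
            + (-⟪xibar d ξ z.1, reflT d ξ z.1 z.2⟫) •
                fderiv ℝ (xibar d ξ) z.1 (reflT d ξ z.1 z.2)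
            - dxib d ξ z.1 (reflT d ξ z.1 z.2) (reflT d ξ z.1 z.2) • xibar d ξ z.1‖
          ≤ ‖(-⟪xibar d ξ z.1, z.2⟫) • fderiv ℝ (xibar d ξ) z.1 z.2
            - dxib d ξ z.1 z.2 z.2 • xibar d ξ z.1
            + (-⟪xibar d ξ z.1, reflT d ξ z.1 z.2⟫) •
                fderiv ℝ (xibar d ξ) z.1 (reflT d ξ z.1 z.2)‖
            + ‖dxib d ξ z.1 (reflT d ξ z.1 z.2) (reflT d ξ z.1 z.2) • xibar d ξ z.1‖ :=
            norm_sub_le _ _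
      _ ≤ ‖(-⟪xibar d ξ z.1, z.2⟫) • fderiv ℝ (xibar d ξ) z.1 z.2
            - dxib d ξ z.1 z.2 z.2 • xibar d ξ z.1‖
            + ‖(-⟪xibar d ξ z.1, reflT d ξ z.1 z.2⟫) •
                fderiv ℝ (xibar d ξ) z.1 (reflT d ξ z.1 z.2)‖
            + ‖dxib d ξ z.1 (reflT d ξ z.1 z.2) (reflT d ξ z.1 z.2) • xibar d ξ z.1‖ := by
            gcongr
            exact norm_add_le _ _
      _ ≤ (‖(-⟪xibar d ξ z.1, z.2⟫) • fderiv ℝ (xibar d ξ) z.1 z.2‖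
            + ‖dxib d ξ z.1 z.2 z.2 • xibar d ξ z.1‖)
            + ‖(-⟪xibar d ξ z.1, reflT d ξ z.1 z.2⟫) •
                fderiv ℝ (xibar d ξ) z.1 (reflT d ξ z.1 z.2)‖
            + ‖dxib d ξ z.1 (reflT d ξ z.1 z.2) (reflT d ξ z.1 z.2) • xibar d ξ z.1‖ := by
            gcongr
            exact norm_sub_le _ _
      _ ≤ 20 * M2 * r ^ 2 := by nlinarith
    rw [hpair, Prod.norm_def]
    apply max_le
    · rw [norm_smul, Real.norm_eq_abs]
      have : |(2 : ℝ)| = 2 := by norm_num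
      rw [this]
      nlinarith [mul_nonneg (mul_nonneg hM2nn (by norm_num : (0:ℝ) ≤ 20)) (sq_nonneg r)]
    · calc ‖(-2 : ℝ) • tangP d ξ z.1 z.1 + btilde d ξ z.1 z.2‖
          ≤ ‖(-2 : ℝ) • tangP d ξ z.1 z.1‖ + ‖btilde d ξ z.1 z.2‖ := norm_add_le _ _
      _ ≤ 4 * r + 20 * M2 * r ^ 2 := by
          rw [norm_smul, Real.norm_eq_abs]
          have : |(-2 : ℝ)| = 2 := by norm_num
          rw [this]
          nlinarith
  set B : ℝ := 18 * r + (ε / r) * (4 * r + 20 * M2 * r ^ 2) with hBdef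
  have hBnn : 0 ≤ B := by
    have h1 : 0 ≤ ε / r := by positivity
    have h2 : 0 ≤ 4 * r + 20 * M2 * r ^ 2 := by nlinarith [sq_nonneg r]
    rw [hBdef]
    nlinarith [mul_nonneg h1 h2, hr.le]
  have hcrude : ∀ z ∈ K, ∀ h : ℝ, 0 < h → h < ε / r →
      ‖pbf d ξ (circleT d h (bounceT d ξ (circleT d h z))) - pbf d ξ z
        - h • (atilde d ξ z.1 z.2 +
            ((0 : EuclideanSpace ℝ (Fin d)), btilde d ξ z.1 z.2))‖ ≤ B := by
    intro z hz h hpos hlt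
    obtain ⟨h1r, h2r, -⟩ := hKprop z hz
    have hc11 : ‖(circleT d h z).1‖ ≤ 2 * r :=
      le_trans (circleT_norm_fst h z) (by nlinarith)
    have hc12 : ‖(circleT d h z).2‖ ≤ 2 * r :=
      le_trans (circleT_norm_snd h z) (by nlinarith)
    have hb1 : ‖(bounceT d ξ (circleT d h z)).1‖ ≤ 2 * r := hc11
    have hb2 : ‖(bounceT d ξ (circleT d h z)).2‖ ≤ 6 * r := by
      rw [bounceT]
      calc ‖reflT d ξ (circleT d h z).1 (circleT d h z).2‖
          ≤ 3 * ‖(circleT d h z).2‖ := norm_reflT_le _ _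
      _ ≤ 6 * r := by nlinarith
    have hc21 : ‖(circleT d h (bounceT d ξ (circleT d h z))).1‖ ≤ 8 * r :=
      le_trans (circleT_norm_fst h _) (by nlinarith)
    have hc22 : ‖(circleT d h (bounceT d ξ (circleT d h z))).2‖ ≤ 8 * r :=
      le_trans (circleT_norm_snd h _) (by nlinarith)
    have hp1 : ‖pbf d ξ (circleT d h (bounceT d ξ (circleT d h z)))‖ ≤ 16 * r := by
      rw [pbf, Prod.norm_def]
      apply max_le (by nlinarith)
      calc ‖tangP d ξ (circleT d h (bounceT d ξ (circleT d h z))).1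
            (circleT d h (bounceT d ξ (circleT d h z))).2‖
          ≤ 2 * ‖(circleT d h (bounceT d ξ (circleT d h z))).2‖ := norm_tangP_le _ _
      _ ≤ 16 * r := by nlinarith
    have hp2 : ‖pbf d ξ z‖ ≤ 2 * r := by
      rw [pbf, Prod.norm_def]
      apply max_le (by nlinarith)
      calc ‖tangP d ξ z.1 z.2‖ ≤ 2 * ‖z.2‖ := norm_tangP_le _ _
      _ ≤ 2 * r := by nlinarith
    have hp3 : ‖h • (atilde d ξ z.1 z.2 +
        ((0 : EuclideanSpace ℝ (Fin d)), btilde d ξ z.1 z.2))‖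
        ≤ (ε / r) * (4 * r + 20 * M2 * r ^ 2) := by
      rw [norm_smul, Real.norm_eq_abs, abs_of_nonneg hpos.le]
      have hA := hAbound z hz
      have hAnn := norm_nonneg (atilde d ξ z.1 z.2 +
        ((0 : EuclideanSpace ℝ (Fin d)), btilde d ξ z.1 z.2))
      exact mul_le_mul hlt.le hA hAnn (by positivity)
    calc ‖pbf d ξ (circleT d h (bounceT d ξ (circleT d h z))) - pbf d ξ z
        - h • (atilde d ξ z.1 z.2 + ((0 : EuclideanSpace ℝ (Fin d)), btilde d ξ z.1 z.2))‖
        ≤ ‖pbf d ξ (circleT d h (bounceT d ξ (circleT d h z))) - pbf d ξ z‖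
          + ‖h • (atilde d ξ z.1 z.2 +
              ((0 : EuclideanSpace ℝ (Fin d)), btilde d ξ z.1 z.2))‖ := norm_sub_le _ _
    _ ≤ (‖pbf d ξ (circleT d h (bounceT d ξ (circleT d h z)))‖ + ‖pbf d ξ z‖)
          + ‖h • (atilde d ξ z.1 z.2 +
              ((0 : EuclideanSpace ℝ (Fin d)), btilde d ξ z.1 z.2))‖ := by
        gcongr
        exact norm_sub_le _ _
    _ ≤ B := by rw [hBdef]; nlinarith
  refine ⟨max M (B / h0 ^ 2) + 1, ?_, ?_⟩
  · have h1 : 0 ≤ max M (B / h0 ^ 2) := le_trans hMnn (le_max_left _ _)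
    linarith
  · intro z h hz1 hz2 hpos hlt
    have hzK0 : z ∈ K0 := ⟨hz1, hz2⟩
    have hzK : z ∈ K := subset_closure hzK0
    have hhr : h < ε / r := lt_of_lt_of_le hlt (min_le_left _ _)
    rcases le_or_gt h h0 with hc | hc
    · have hkey := hTaylor z hzK h hpos hc
      have h1ne := (hdom z hzK h ⟨hpos.le, hc⟩).1
      rw [weaveS_eq h1ne, weaveS_zero (hz1ne z hzK), hΨ0 z hzK] at hkey
      calc ‖pbf d ξ (circleT d h (bounceT d ξ (circleT d h z))) - pbf d ξ z
          - h • (atilde d ξ z.1 z.2 +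
              ((0 : EuclideanSpace ℝ (Fin d)), btilde d ξ z.1 z.2))‖
          ≤ M * h ^ 2 := hkey
      _ ≤ h ^ 2 * (max M (B / h0 ^ 2) + 1) := by
          have h1 : M ≤ max M (B / h0 ^ 2) := le_max_left _ _
          nlinarith [sq_nonneg h]
    · have hkey := hcrude z hzK h hpos hhr
      have e2 : h0 ^ 2 ≤ h ^ 2 := by nlinarith
      have e3 : B / h0 ^ 2 ≤ max M (B / h0 ^ 2) := le_max_right _ _
      have e4 : (0 : ℝ) < h0 ^ 2 := by positivity
      have e5 : B = B / h0 ^ 2 * h0 ^ 2 := by field_simp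
      have e6 : 0 ≤ B / h0 ^ 2 := div_nonneg hBnn e4.le
      calc ‖pbf d ξ (circleT d h (bounceT d ξ (circleT d h z))) - pbf d ξ z
          - h • (atilde d ξ z.1 z.2 +
              ((0 : EuclideanSpace ℝ (Fin d)), btilde d ξ z.1 z.2))‖
          ≤ B := hkey
      _ = B / h0 ^ 2 * h0 ^ 2 := e5
      _ ≤ h ^ 2 * (max M (B / h0 ^ 2) + 1) := by nlinarith [sq_nonneg h]
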